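/- arXiv:1407.7162 — 5 statements merged into one kernel-verified Lean document; each statement's English description precedes it below -/
import Mathlib

section
/- Let $k,b\in\mathbb{N}$ with $k\geq 1$, and let $\phi_1,\ldots,\phi_k$ be permutations of the set $[k]^b$ of words of length $b$ over alphabet $[k]=\{1,\ldots,k\}$, and let $\rho:[k]^b\to[k]$ be any function. Then there exists a permutation $\phi$ of $[k]^{b+1}$ such that: (i) for every $x\in[k]$ and every $w\in[k]^b$ there exists $y\in[k]$ with $\phi(xw)=y\,\phi_x(w)$ (concatenation of the letter $y$ with the word $\phi_x(w)$); and (ii) for every $w\in[k]^b$, $\phi(1w)=\rho(w)\,\phi_1(w)$. -/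
/-- merging `k` permutations of `[k]^b` into a permutation of `[k]^(b+1)`.
Words of length `b` over alphabet `[k]` are modeled as `Fin b → Fin k`; the letter `1`
is `(⟨0, hk⟩ : Fin k)`; concatenation `xw` is `Fin.cons x w`. -/
theorem stmt0 (k b : ℕ) (hk : 0 < k)
    (φ : Fin k → Equiv.Perm (Fin b → Fin k))
    (ρ : (Fin b → Fin k) → Fin k) :
    ∃ Φ : Equiv.Perm (Fin (b + 1) → Fin k),
      (∀ (x : Fin k) (w : Fin b → Fin k),
        ∃ y : Fin k, Φ (Fin.cons x w) = Fin.cons y (φ x w)) ∧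
      (∀ w : Fin b → Fin k,
        Φ (Fin.cons (⟨0, hk⟩ : Fin k) w) = Fin.cons (ρ w) (φ ⟨0, hk⟩ w)) := by
  classical
  set z : Fin k := ⟨0, hk⟩ with hz
  set σ : (Fin b → Fin k) → Equiv.Perm (Fin k) :=
    fun v => Equiv.swap z (ρ ((φ z).symm v)) with hσ
  refine ⟨{
    toFun := fun u => Fin.cons (σ (φ (u 0) (Fin.tail u)) (u 0)) (φ (u 0) (Fin.tail u)),
    invFun := fun u =>
      Fin.cons ((σ (Fin.tail u)).symm (u 0))
        ((φ ((σ (Fin.tail u)).symm (u 0))).symm (Fin.tail u)),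
    left_inv := ?_, right_inv := ?_ }, ?_, ?_⟩
  · intro u
    simp only [Fin.cons_zero, Fin.tail_cons, Equiv.symm_apply_apply]
    exact Fin.cons_self_tail u
  · intro u
    simp only [Fin.cons_zero, Fin.tail_cons, Equiv.apply_symm_apply]
    exact Fin.cons_self_tail u
  · intro x w
    refine ⟨σ (φ x w) x, ?_⟩
    simp [Fin.cons_zero, Fin.tail_cons]
  · intro w
    simp only [Equiv.coe_fn_mk, Fin.cons_zero, Fin.tail_cons]
    have : σ (φ z w) z = ρ w := by
      simp [hσ]
    rw [this]
end

section
/- Let $k\geq 1$ and $b\in\mathbb{N}$, and let $\alpha:[k]^b\times[b]\to[k]\cup\{\bot\}$ be a function such that for every word $w\in[k]^b$ and every position $i\in[b]$, $\alpha(w,i)\neq\bot$ if and only if the $i$-th letter of $w$ equals $1$. Then there exists a permutation $\phi$ of $[k]^b$ such that for every $w\in[k]^b$ and every $i\in[b]$, if $w_i=1$ then the $i$-th letter of $\phi(w)$ equals $\alpha(w,i)$. -/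
namespace Stmt1Aux

variable {k b : ℕ}

def pts (σ : Fin b → Option (Fin k)) : Finset (Fin b → Fin k) :=
  Finset.univ.filter (fun v => ∀ i a, σ i = some a → v i = a)

lemma mem_pts {σ : Fin b → Option (Fin k)} {v : Fin b → Fin k} :
    v ∈ pts σ ↔ ∀ i a, σ i = some a → v i = a := by
  simp [pts]

def tp (σ : Fin b → Option (Fin k)) : Fin b → Bool := fun i => (σ i).isSome

def fcount (d : Fin b → Bool) : ℕ := (Finset.univ.filter (fun i => d i = false)).card

lemma fcount_cons (c : Bool) (e : Fin b → Bool) :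
    fcount (Fin.cons c e) = (cond c 0 1) + fcount e := by
  unfold fcount
  rw [Finset.card_filter, Finset.card_filter, Fin.sum_univ_succ]
  simp only [Fin.cons_zero, Fin.cons_succ]
  cases c <;> simp

lemma card_eq_sum_filter_fibers {α β : Type*} [DecidableEq β] [Fintype β]
    (s : Multiset α) (g : α → β) :
    Multiset.card s = ∑ d : β, Multiset.card (s.filter (fun x => g x = d)) := by
  induction s using Multiset.induction_on with
  | empty => simp
  | cons x s ih =>
    simp only [Multiset.filter_cons, Multiset.card_add, Multiset.card_cons,
      Finset.sum_add_distrib, ← ih]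
    have h1 : ∀ d : β, Multiset.card (if g x = d then ({x} : Multiset α) else 0)
        = if g x = d then 1 else 0 := by
      intro d; split <;> simp
    rw [Finset.sum_congr rfl (fun d _ => h1 d), Finset.sum_ite_eq]
    simp [add_comm]

lemma card_finsum {α β : Type*} (s : Finset β) (f : β → Multiset α) :
    Multiset.card (∑ x ∈ s, f x) = ∑ x ∈ s, Multiset.card (f x) := by
  induction s using Finset.cons_induction with
  | empty => simp
  | cons x s hx ih => rw [Finset.sum_cons, Multiset.card_add, ih, Finset.sum_cons]

lemma filter_finsum {α β : Type*} (p : α → Prop) [DecidablePred p]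
    (s : Finset β) (f : β → Multiset α) :
    (∑ x ∈ s, f x).filter p = ∑ x ∈ s, (f x).filter p := by
  induction s using Finset.cons_induction with
  | empty => simp
  | cons x s hx ih => rw [Finset.sum_cons, Multiset.filter_add, ih, Finset.sum_cons]

lemma distribute {α : Type*} {k : ℕ} (t : Multiset α) (c : Fin k → ℕ)
    (h : Multiset.card t ≤ ∑ a, c a) :
    ∃ u : Fin k → Multiset α, (∑ a, u a) = t ∧ ∀ a, Multiset.card (u a) ≤ c a := by
  induction t using Multiset.induction_on with
  | empty => exact ⟨fun _ => 0, by simp, fun a => by simp⟩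
  | cons x t ih =>
    have hcard : Multiset.card t + 1 ≤ ∑ a, c a := by simpa using h
    obtain ⟨u, husum, hucard⟩ := ih (by omega)
    obtain ⟨a0, ha0⟩ : ∃ a, Multiset.card (u a) < c a := by
      by_contra hno
      push_neg at hno
      have h2 : ∑ a, c a ≤ ∑ a, Multiset.card (u a) :=
        Finset.sum_le_sum fun a _ => hno a
      rw [← card_finsum, husum] at h2
      omega
    refine ⟨Function.update u a0 (x ::ₘ u a0), ?_, ?_⟩
    · rw [Finset.sum_update_of_mem (Finset.mem_univ a0)]
      rw [← husum, ← Finset.add_sum_erase _ u (Finset.mem_univ a0)]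
      rw [Multiset.cons_add, Finset.erase_eq]
    · intro a
      rcases eq_or_ne a a0 with rfl | hne
      · rw [Function.update_self, Multiset.card_cons]; omega
      · rw [Function.update_of_ne hne]; exact hucard a

lemma tp_eq_cons_iff {σ : Fin (b+1) → Option (Fin k)} {c : Bool} {e : Fin b → Bool} :
    tp σ = Fin.cons c e ↔ ((σ 0).isSome = c ∧ tp (fun i => σ i.succ) = e) := by
  constructor
  · intro hh
    refine ⟨?_, funext fun i => ?_⟩
    · have := congrFun hh 0; simpa [tp] using this
    · have := congrFun hh i.succ; simpa [tp] using this
  · rintro ⟨h0, ht⟩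
    funext i
    refine Fin.cases ?_ (fun j => ?_) i
    · simpa [tp] using h0
    · have := congrFun ht j; simpa [tp] using this

lemma cube_union (k : ℕ) : ∀ (b : ℕ) (s : Multiset (Fin b → Option (Fin k))),
    (∀ d : Fin b → Bool,
       Multiset.card (s.filter (fun σ => tp σ = d)) ≤ (k-1) ^ fcount d) →
    Multiset.card s ≤ (s.toFinset.sup pts).card := by
  intro b
  induction b with
  | zero =>
    intro s h
    have hfil : s.filter (fun σ => tp σ = fun i => i.elim0) = s :=
      Multiset.filter_eq_self.mpr (fun σ _ => funext fun i => i.elim0)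
    have hs : Multiset.card s ≤ 1 := by
      have := h (fun i => i.elim0)
      rw [hfil] at this
      simpa [fcount] using this
    rcases eq_or_ne s 0 with rfl | hne
    · simp
    · obtain ⟨σ, hσ⟩ := Multiset.exists_mem_of_ne_zero hne
      have hv : (fun i : Fin 0 => i.elim0) ∈ s.toFinset.sup pts :=
        Finset.mem_sup.mpr ⟨σ, Multiset.mem_toFinset.mpr hσ,
          mem_pts.mpr (fun i => i.elim0)⟩
      have : 1 ≤ (s.toFinset.sup pts).card := Finset.card_pos.mpr ⟨_, hv⟩
      omega
  | succ b ih =>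
    intro s h
    -- tail maps
    set T : (Fin (b+1) → Option (Fin k)) → (Fin b → Option (Fin k)) :=
      fun σ i => σ i.succ with hT
    -- pieces
    set fixM : Fin k → Multiset (Fin (b+1) → Option (Fin k)) :=
      fun a => s.filter (fun σ => σ 0 = some a) with hfixM
    set freeM : Multiset (Fin (b+1) → Option (Fin k)) :=
      s.filter (fun σ => σ 0 = none) with hfreeM
    set tmap : (Fin b → Bool) → Multiset (Fin b → Option (Fin k)) :=
      fun e => (freeM.filter (fun σ => tp (T σ) = e)).map T with htmap
    set m : Fin k → (Fin b → Bool) → ℕ :=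
      fun a e => Multiset.card ((fixM a).filter (fun σ => tp (T σ) = e)) with hm
    -- (A)
    have hfixsum : ∀ e : Fin b → Bool, (∑ a, m a e) ≤ (k-1) ^ fcount e := by
      intro e
      have hA : (∑ a, m a e)
          = Multiset.card (s.filter (fun σ => tp σ = Fin.cons true e)) := by
        rw [card_eq_sum_filter_fibers (s.filter (fun σ => tp σ = Fin.cons true e))
          (fun σ => σ 0)]
        rw [univ_option, Finset.sum_insertNone]
        have hnone : ((s.filter (fun σ => tp σ = Fin.cons true e)).filter
            (fun σ => σ 0 = none)) = 0 := by
          rw [Multiset.filter_eq_nil]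
          intro σ hσ h0
          have := (tp_eq_cons_iff.mp (Multiset.mem_filter.mp hσ).2).1
          rw [h0] at this
          simp at this
        rw [hnone]
        simp only [Multiset.card_zero, zero_add]
        refine Finset.sum_congr rfl (fun a _ => ?_)
        simp only [hm, hfixM, Multiset.filter_filter]
        congr 1
        apply Multiset.filter_congr
        intro σ _
        constructor
        · rintro ⟨h1, h2⟩
          exact ⟨h2, tp_eq_cons_iff.mpr ⟨by rw [h2]; rfl, h1⟩⟩
        · rintro ⟨h2, h1⟩
          exact ⟨(tp_eq_cons_iff.mp h1).2, h2⟩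
      rw [hA]
      have := h (Fin.cons true e)
      rw [fcount_cons] at this
      simpa using this
    have hmle : ∀ a e, m a e ≤ (k-1) ^ fcount e := by
      intro a e
      refine le_trans ?_ (hfixsum e)
      exact Finset.single_le_sum (f := fun a => m a e) (fun _ _ => Nat.zero_le _)
        (Finset.mem_univ a)
    -- (B)
    have hfreebound : ∀ e : Fin b → Bool,
        Multiset.card (tmap e) ≤ (k-1) ^ fcount e * (k-1) := by
      intro e
      rw [htmap]
      simp only [Multiset.card_map]
      have hEq : (freeM.filter (fun σ => tp (T σ) = e))
          = s.filter (fun σ => tp σ = Fin.cons false e) := by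
        simp only [hfreeM, Multiset.filter_filter]
        apply Multiset.filter_congr
        intro σ _
        constructor
        · rintro ⟨h1, h2⟩
          exact tp_eq_cons_iff.mpr ⟨by rw [h2]; rfl, h1⟩
        · intro h1
          obtain ⟨h2, h3⟩ := tp_eq_cons_iff.mp h1
          exact ⟨h3, Option.not_isSome_iff_eq_none.mp (by rw [h2]; simp)⟩
      rw [hEq]
      have := h (Fin.cons false e)
      rw [fcount_cons] at this
      calc Multiset.card (s.filter (fun σ => tp σ = Fin.cons false e))
          ≤ (k-1) ^ (cond false 0 1 + fcount e) := this
        _ = (k-1) ^ fcount e * (k-1) := by simp [pow_succ, pow_add, mul_comm]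
    -- distribute free cubes
    have hdist : ∀ e : Fin b → Bool,
        Multiset.card (tmap e) ≤ ∑ a, ((k-1) ^ fcount e - m a e) := by
      intro e
      rcases Nat.eq_zero_or_pos k with hk0 | hkpos
      · subst hk0
        have := hfreebound e
        simpa using this
      have h1 : ∑ a, ((k-1) ^ fcount e - m a e) + ∑ a, m a e
          = k * (k-1) ^ fcount e := by
        rw [← Finset.sum_add_distrib]
        have : ∀ a : Fin k, (k-1) ^ fcount e - m a e + m a e = (k-1) ^ fcount e :=
          fun a => Nat.sub_add_cancel (hmle a e)
        rw [Finset.sum_congr rfl (fun a _ => this a)]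
        simp [Finset.sum_const, mul_comm]
      have h2 : (k-1) ^ fcount e * (k-1) + (k-1) ^ fcount e = k * (k-1) ^ fcount e := by
        cases k with
        | zero => omega
        | succ n => rw [Nat.succ_sub_one, Nat.succ_mul, Nat.mul_comm]
      have h3 := hfreebound e
      have h4 := hfixsum e
      omega
    choose u husum hucard using fun e => distribute (tmap e)
      (fun a => (k-1) ^ fcount e - m a e) (hdist e)
    -- branch multisets
    set sA : Fin k → Multiset (Fin b → Option (Fin k)) :=
      fun a => ((fixM a).map T) + ∑ e, u e a with hsA
    have hue_le : ∀ e a, u e a ≤ tmap e := by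
      intro e a
      rw [← husum e]
      exact Finset.single_le_sum (f := fun a => u e a) (fun _ _ => Multiset.zero_le _)
        (Finset.mem_univ a)
    have htmap_tp : ∀ e τ, τ ∈ tmap e → tp τ = e := by
      intro e τ hτ
      rw [htmap] at hτ
      obtain ⟨σ, hσ, rfl⟩ := Multiset.mem_map.mp hτ
      exact (Multiset.mem_filter.mp hσ).2
    -- branch condition
    have hcond : ∀ a, ∀ d : Fin b → Bool,
        Multiset.card ((sA a).filter (fun σ => tp σ = d)) ≤ (k-1) ^ fcount d := by
      intro a d
      rw [hsA]
      simp only [Multiset.filter_add, Multiset.card_add]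
      have h1 : Multiset.card (((fixM a).map T).filter (fun τ => tp τ = d)) = m a d := by
        rw [Multiset.filter_map, Multiset.card_map]
        rfl
      have h2 : (∑ e, u e a).filter (fun τ => tp τ = d) = (u d a).filter (fun τ => tp τ = d) +
          ∑ e ∈ Finset.univ.erase d, (u e a).filter (fun τ => tp τ = d) := by
        rw [filter_finsum, ← Finset.add_sum_erase _ _ (Finset.mem_univ d)]
      have h3 : ∀ e ∈ Finset.univ.erase d, (u e a).filter (fun τ => tp τ = d) = 0 := by
        intro e he
        rw [Multiset.filter_eq_nil]
        intro τ hτ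
        rw [htmap_tp e τ (Multiset.mem_of_le (hue_le e a) hτ)]
        exact (Finset.mem_erase.mp he).1
      have h4 : (u d a).filter (fun τ => tp τ = d) = u d a :=
        Multiset.filter_eq_self.mpr (fun τ hτ =>
          htmap_tp d τ (Multiset.mem_of_le (hue_le d a) hτ))
      rw [h1, h2, h4, Finset.sum_congr rfl h3]
      simp only [Finset.sum_const_zero, add_zero]
      have h5 := hucard d a
      have h6 := hmle a d
      omega
    -- total cards
    have hcards : Multiset.card s = ∑ a, Multiset.card (sA a) := by
      have h1 : ∀ a, Multiset.card (sA a)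
          = Multiset.card (fixM a) + ∑ e, Multiset.card (u e a) := by
        intro a
        rw [hsA]
        simp only [Multiset.card_add, Multiset.card_map, card_finsum]
      have h2 : ∑ a, ∑ e : Fin b → Bool, Multiset.card (u e a)
          = ∑ e : Fin b → Bool, Multiset.card (tmap e) := by
        rw [Finset.sum_comm]
        refine Finset.sum_congr rfl (fun e _ => ?_)
        rw [← card_finsum, husum e]
      have h3 : ∑ e : Fin b → Bool, Multiset.card (tmap e) = Multiset.card freeM := by
        rw [htmap]
        simp only [Multiset.card_map]
        exact (card_eq_sum_filter_fibers freeM (fun σ => tp (T σ))).symm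
      have h4 : Multiset.card s = Multiset.card freeM + ∑ a, Multiset.card (fixM a) := by
        rw [card_eq_sum_filter_fibers s (fun σ => σ 0)]
        rw [univ_option, Finset.sum_insertNone]
      rw [Finset.sum_congr rfl (fun a _ => h1 a), Finset.sum_add_distrib, h2, h3, h4]
      omega
    -- union bound
    set U := s.toFinset.sup pts with hU
    have hslice : ∀ a, ((sA a).toFinset.sup pts).card
        ≤ (U.filter (fun v => v 0 = a)).card := by
      intro a
      refine le_trans (Finset.card_le_card ?_)
        (Finset.card_image_le (f := fun (v : Fin (b+1) → Fin k) (i : Fin b) => v i.succ))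
      intro v' hv'
      obtain ⟨τ, hτmem, hv'pts⟩ := Finset.mem_sup.mp hv'
      rw [Multiset.mem_toFinset] at hτmem
      have hex : ∃ σ, σ ∈ s ∧ (σ 0 = some a ∨ σ 0 = none) ∧ τ = T σ := by
        rcases Multiset.mem_add.mp hτmem with hcase | hcase
        · obtain ⟨σ, hσ, rfl⟩ := Multiset.mem_map.mp hcase
          rw [hfixM, Multiset.mem_filter] at hσ
          exact ⟨σ, hσ.1, Or.inl hσ.2, rfl⟩
        · obtain ⟨e, _, hτe⟩ := Multiset.mem_sum.mp hcase
          have hmem := Multiset.mem_of_le (hue_le e a) hτe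
          rw [htmap] at hmem
          obtain ⟨σ, hσ, rfl⟩ := Multiset.mem_map.mp hmem
          rw [Multiset.mem_filter, hfreeM, Multiset.mem_filter] at hσ
          exact ⟨σ, hσ.1.1, Or.inr hσ.1.2, rfl⟩
      obtain ⟨σ, hσs, hσ0, rfl⟩ := hex
      refine Finset.mem_image.mpr ⟨Fin.cons a v', ?_, ?_⟩
      · rw [Finset.mem_filter]
        refine ⟨Finset.mem_sup.mpr ⟨σ, Multiset.mem_toFinset.mpr hσs, mem_pts.mpr ?_⟩, ?_⟩
        · intro i
          refine Fin.cases ?_ (fun j => ?_) i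
          · intro cc h0
            rcases hσ0 with hh | hh
            · rw [hh] at h0
              rw [Fin.cons_zero]
              exact (Option.some_injective _ h0).symm ▸ rfl
            · rw [hh] at h0; cases h0
          · intro cc hj
            rw [Fin.cons_succ]
            exact mem_pts.mp hv'pts j cc hj
        · simp
      · funext i
        simp
    have hUcard : ∑ a, (U.filter (fun v => v 0 = a)).card = U.card :=
      (Finset.card_eq_sum_card_fiberwise (fun v _ => Finset.mem_univ (v 0))).symm
    calc Multiset.card s = ∑ a, Multiset.card (sA a) := hcards
      _ ≤ ∑ a, ((sA a).toFinset.sup pts).card :=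
          Finset.sum_le_sum (fun a _ => ih (sA a) (hcond a))
      _ ≤ ∑ a, (U.filter (fun v => v 0 = a)).card :=
          Finset.sum_le_sum (fun a _ => hslice a)
      _ = U.card := hUcard

end Stmt1Aux

open Stmt1Aux in
/-- given `α : [k]^b × [b] → [k] ∪ {⊥}` (modeled with `Option (Fin k)`)
with `α(w,i) ≠ ⊥ ↔ w_i = 1` (the letter `1` is `⟨0, hk⟩ : Fin k`), there is a
permutation `φ` of `[k]^b` with `φ(w)_i = α(w,i)` whenever `w_i = 1`. -/
theorem stmt1 (k b : ℕ) (hk : 0 < k)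
    (α : (Fin b → Fin k) → Fin b → Option (Fin k))
    (hα : ∀ (w : Fin b → Fin k) (i : Fin b),
      (α w i).isSome ↔ w i = (⟨0, hk⟩ : Fin k)) :
    ∃ φ : Equiv.Perm (Fin b → Fin k),
      ∀ (w : Fin b → Fin k) (i : Fin b),
        w i = (⟨0, hk⟩ : Fin k) → α w i = some ((φ w) i) := by
  classical
  set z : Fin k := ⟨0, hk⟩ with hz
  set σof : (Fin b → Fin k) → (Fin b → Option (Fin k)) :=
    fun w i => if w i = z then α w i else none with hσof
  set t : (Fin b → Fin k) → Finset (Fin b → Fin k) :=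
    fun w => pts (σof w) with ht
  have huniv : ∀ d : Fin b → Bool,
      (Finset.univ.filter (fun w : Fin b → Fin k => tp (σof w) = d)).card
        ≤ (k-1) ^ fcount d := by
    intro d
    have hsub : Finset.univ.filter (fun w : Fin b → Fin k => tp (σof w) = d)
        ⊆ Fintype.piFinset (fun i => if d i then ({z} : Finset (Fin k)) else {z}ᶜ) := by
      intro w hw
      rw [Fintype.mem_piFinset]
      intro i
      have hwi := congrFun (Finset.mem_filter.mp hw).2 i
      by_cases hcase : w i = z
      · have hsome : (α w i).isSome := (hα w i).mpr hcase
        have htp : tp (σof w) i = true := by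
          simp [tp, hσof, hcase, hsome]
        rw [htp] at hwi
        rw [← hwi]
        simp [hcase]
      · have htp : tp (σof w) i = false := by
          simp [tp, hσof, hcase]
        rw [htp] at hwi
        rw [← hwi]
        simp [hcase]
    refine le_trans (Finset.card_le_card hsub) ?_
    rw [Fintype.card_piFinset]
    have hcards : ∀ i, (if d i then ({z} : Finset (Fin k)) else {z}ᶜ).card
        = if d i then 1 else k - 1 := by
      intro i
      split
      · simp
      · rw [Finset.card_compl]
        simp
    rw [Finset.prod_congr rfl (fun i _ => hcards i), Finset.prod_ite]
    simp only [Finset.prod_const, one_pow, one_mul]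
    apply le_of_eq
    congr 1
    unfold fcount
    congr 1
    apply Finset.filter_congr
    intro i _
    simp
  have hall : ∀ S : Finset (Fin b → Fin k), S.card ≤ (S.biUnion t).card := by
    intro S
    have hb : S.biUnion t = ((S.val.map σof).toFinset.sup pts) := by
      ext v
      simp only [Finset.mem_biUnion, Finset.mem_sup, Multiset.mem_toFinset,
        Multiset.mem_map]
      constructor
      · rintro ⟨w, hw, hv⟩
        exact ⟨σof w, ⟨w, hw, rfl⟩, hv⟩
      · rintro ⟨τ, ⟨w, hw, rfl⟩, hv⟩
        exact ⟨w, hw, hv⟩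
    rw [hb]
    have hcond : ∀ d : Fin b → Bool,
        Multiset.card ((S.val.map σof).filter (fun σ => tp σ = d))
          ≤ (k-1) ^ fcount d := by
      intro d
      rw [Multiset.filter_map, Multiset.card_map]
      simp only [Function.comp_def]
      refine le_trans (Multiset.card_le_card (Multiset.filter_le_filter _
        (Finset.val_le_iff.mpr (Finset.subset_univ S)))) ?_
      rw [← Finset.filter_val]
      exact huniv d
    have := cube_union k b (S.val.map σof) hcond
    simpa using this
  obtain ⟨f, hfinj, hft⟩ :=
    (Finset.all_card_le_biUnion_card_iff_exists_injective t).mp hall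
  have hbij : Function.Bijective f := Finite.injective_iff_bijective.mp hfinj
  refine ⟨Equiv.ofBijective f hbij, ?_⟩
  intro w i hwi
  have hmem := mem_pts.mp (hft w)
  have hsome : (α w i).isSome := (hα w i).mpr hwi
  obtain ⟨a, ha⟩ := Option.isSome_iff_exists.mp hsome
  have hσ : σof w i = some a := by simp [hσof, hwi, ha]
  have hfa := hmem i a hσ
  rw [ha]
  have hcoe : (Equiv.ofBijective f hbij) w = f w := rfl
  rw [hcoe, hfa]
end

section
/- Let $n,k\geq 1$, $b\geq 1$, and $c=b\cdot k^{b-1}$ with $c\geq n$. Let $f:[c]\times[k]\to\mathbb{N}$. Let $V_1=[k]^b$ (viewed as a disjoint copy) and $V_2=[k]^b$, and let $\beta:V_1\times[b]\to[c]\cup\{\bot\}$ be a function such that $\beta(w,j)=\bot$ iff $w_j\neq 1$, and such that every element of $[c]$ is attained by $\beta$ exactly once. Define the weight of a bijection $\phi:V_1\to V_2$ as $W(\phi)=\sum_{t\in V_1}\sum_{i\in[b],\,\beta(t,i)\neq\bot} f(\beta(t,i),\phi(t)_i)$. Then for every bijection $\phi:V_1\to V_2$, $W(\phi)\in X_f$,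 where $X_f=\{\sum_{i=1}^{c} f(i,\sigma(i)) : \sigma:[c]\to[k]\}$. -/
open Finset

/-- with `V₁ = V₂ = [k]^b`, `c = b·k^(b-1) ≥ n`, `f : [c]×[k] → ℕ`, and
`β : V₁×[b] → [c] ∪ {⊥}` (modeled with `Option (Fin c)`) such that `β(w,j) = ⊥ ↔ w_j ≠ 1`
and every element of `[c]` is attained exactly once, the weight
`W(φ) = ∑_t ∑_{i, β(t,i) ≠ ⊥} f(β(t,i), φ(t)_i)` of every bijection `φ : V₁ → V₂`
belongs to `X_f = { ∑_{i=1}^c f(i,σ(i)) : σ : [c] → [k] }`. -/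
theorem stmt4 (n k b c : ℕ) (hn : 1 ≤ n) (hk : 1 ≤ k) (hb : 1 ≤ b)
    (hc : c = b * k ^ (b - 1)) (hcn : n ≤ c)
    (f : Fin c → Fin k → ℕ)
    (β : (Fin b → Fin k) → Fin b → Option (Fin c))
    (hβ : ∀ (w : Fin b → Fin k) (j : Fin b),
      β w j = none ↔ w j ≠ (⟨0, hk⟩ : Fin k))
    (hβbij : ∀ x : Fin c, ∃! p : (Fin b → Fin k) × Fin b, β p.1 p.2 = some x)
    (φ : (Fin b → Fin k) ≃ (Fin b → Fin k)) :
    (∑ t : Fin b → Fin k, ∑ i : Fin b, (β t i).elim 0 (fun x => f x ((φ t) i)))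
      ∈ {x : ℕ | ∃ σ : Fin c → Fin k, ∑ i, f i (σ i) = x} := by
  classical
  set σ : Fin c → Fin k := fun x => φ (hβbij x).choose.1 (hβbij x).choose.2 with hσ
  refine ⟨σ, ?_⟩
  have hprod : (∑ t : Fin b → Fin k, ∑ i : Fin b, (β t i).elim 0 (fun x => f x (φ t i)))
      = ∑ p : (Fin b → Fin k) × Fin b, (β p.1 p.2).elim 0 (fun x => f x (φ p.1 p.2)) :=
    (Fintype.sum_prod_type
      (f := fun p : (Fin b → Fin k) × Fin b => (β p.1 p.2).elim 0 (fun x => f x (φ p.1 p.2)))).symm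
  rw [hprod]
  rw [← Finset.sum_filter_add_sum_filter_not Finset.univ
      (fun p : (Fin b → Fin k) × Fin b => (β p.1 p.2).isSome)]
  have h2 : ∑ p ∈ Finset.univ.filter
      (fun p : (Fin b → Fin k) × Fin b => ¬ (β p.1 p.2).isSome),
      (β p.1 p.2).elim 0 (fun x => f x (φ p.1 p.2)) = 0 := by
    refine Finset.sum_eq_zero fun p hp => ?_
    simp only [Finset.mem_filter, Option.not_isSome_iff_eq_none] at hp
    rw [hp.2]; rfl
  rw [h2, add_zero]
  refine (Finset.sum_bij (fun (p : (Fin b → Fin k) × Fin b) hp =>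
      (β p.1 p.2).get (by simpa using hp)) ?_ ?_ ?_ ?_).symm
  · intro p hp; exact Finset.mem_univ _
  · intro p hp q hq h
    simp only [Finset.mem_filter] at hp hq
    have hp' : β p.1 p.2 = some ((β p.1 p.2).get (by simpa using hp)) :=
      (Option.some_get _).symm
    have hq' : β q.1 q.2 = some ((β p.1 p.2).get (by simpa using hp)) := by
      rw [h]; exact (Option.some_get _).symm
    exact (hβbij _).unique hp' hq'
  · intro x hx
    obtain ⟨p, hp, -⟩ := hβbij x
    refine ⟨p, Finset.mem_filter.mpr ⟨Finset.mem_univ _, by simp [hp]⟩, ?_⟩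
    simp [hp]
  · intro p hp
    simp only [Finset.mem_filter] at hp
    have hsome : (β p.1 p.2).isSome := by simpa using hp
    obtain ⟨x, hpx⟩ := Option.isSome_iff_exists.mp hsome
    have hch : (hβbij x).choose = p := ((hβbij x).choose_spec.2 p hpx).symm
    simp only [hσ, hpx, Option.elim, Option.get_some, hch]
end

section
/- Let $n,k\geq 1$, $b\geq 1$, and $c=b\cdot k^{b-1}$ with $c\geq n$. Let $f:[c]\times[k]\to\mathbb{N}$ and let $\beta:[k]^b\times[b]\to[c]\cup\{\bot\}$ satisfy: $\beta(w,j)=\bot$ iff $w_j\neq 1$, and every element of $[c]$ is attained by $\beta$ exactly once. Then for every $x\in X_f$ (where $X_f=\{\sum_{i=1}^{c} f(i,\sigma(i)) : \sigma:[c]\to[k]\}$) there exists a bijection $\phi:[k]^b\to[k]^b$ such that $\sum_{t\in[k]^b}\sum_{i\in[b],\,\beta(t,i)\neq\bot} f(\beta(t,i),\phi(t)_i)=x$. -/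
open Finset

lemma key_bij {α : Type*} [DecidableEq α] (z : α) :
    ∀ (b : ℕ) (τ : (Fin b → α) → Fin b → α),
    ∃ φ : (Fin b → α) ≃ (Fin b → α), ∀ w j, w j = z → φ w j = τ w j := by
  intro b
  induction b with
  | zero => exact fun τ => ⟨Equiv.refl _, fun w j => j.elim0⟩
  | succ b ih =>
    intro τ
    choose ρ hρ using fun v : α => ih (fun u j => τ (Fin.cons v u) j.succ)
    set a : (Fin b → α) → α := fun u => τ (Fin.cons z u) 0 with ha
    let E : (Fin (b + 1) → α) ≃ α × (Fin b → α) :=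
      { toFun := fun w => (w 0, Fin.tail w)
        invFun := fun p => Fin.cons p.1 p.2
        left_inv := fun w => Fin.cons_self_tail w
        right_inv := fun p => by simp }
    let Φ : α × (Fin b → α) ≃ α × (Fin b → α) :=
      (Equiv.prodShear (Equiv.refl α) ρ).trans
        ((Equiv.prodComm _ _).trans
          ((Equiv.prodShear (Equiv.refl _)
            (fun y' => Equiv.swap z (a ((ρ z).symm y')))).trans
            (Equiv.prodComm _ _)))
    refine ⟨E.trans (Φ.trans E.symm), ?_⟩
    intro w j hj
    have hφ : (E.trans (Φ.trans E.symm)) w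
        = Fin.cons (Equiv.swap z (a ((ρ z).symm (ρ (w 0) (Fin.tail w)))) (w 0))
            (ρ (w 0) (Fin.tail w)) := rfl
    rw [hφ]
    cases j using Fin.cases with
    | zero =>
      rw [Fin.cons_zero, hj, Equiv.symm_apply_apply, Equiv.swap_apply_left]
      have hw : Fin.cons z (Fin.tail w) = w := by rw [← hj]; exact Fin.cons_self_tail w
      rw [ha]
      dsimp only
      rw [hw]
    | succ j' =>
      rw [Fin.cons_succ]
      have ht : Fin.tail w j' = z := hj
      rw [hρ (w 0) (Fin.tail w) j' ht, Fin.cons_self_tail]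

/-- converse direction of Statement 4 — every `x ∈ X_f` is the weight of
some bijection `φ : [k]^b → [k]^b`. -/
theorem stmt5 (n k b c : ℕ) (hn : 1 ≤ n) (hk : 1 ≤ k) (hb : 1 ≤ b)
    (hc : c = b * k ^ (b - 1)) (hcn : n ≤ c)
    (f : Fin c → Fin k → ℕ)
    (β : (Fin b → Fin k) → Fin b → Option (Fin c))
    (hβ : ∀ (w : Fin b → Fin k) (j : Fin b),
      β w j = none ↔ w j ≠ (⟨0, hk⟩ : Fin k))
    (hβbij : ∀ x : Fin c, ∃! p : (Fin b → Fin k) × Fin b, β p.1 p.2 = some x)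
    (x : ℕ) (hx : x ∈ {x : ℕ | ∃ σ : Fin c → Fin k, ∑ i, f i (σ i) = x}) :
    ∃ φ : (Fin b → Fin k) ≃ (Fin b → Fin k),
      (∑ t : Fin b → Fin k, ∑ i : Fin b, (β t i).elim 0 (fun y => f y ((φ t) i))) = x := by
  classical
  obtain ⟨σ, hσ⟩ := hx
  obtain ⟨φ, hφ⟩ := key_bij (⟨0, hk⟩ : Fin k) b
    (fun w j => (β w j).elim (⟨0, hk⟩ : Fin k) (fun y => σ y))
  refine ⟨φ, ?_⟩
  have hprod :
      (∑ t : Fin b → Fin k, ∑ i : Fin b, (β t i).elim 0 (fun y => f y ((φ t) i)))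
        = ∑ p : (Fin b → Fin k) × Fin b, (β p.1 p.2).elim 0 (fun y => f y (φ p.1 p.2)) :=
    (Fintype.sum_prod_type (fun p : (Fin b → Fin k) × Fin b =>
      (β p.1 p.2).elim 0 (fun y => f y (φ p.1 p.2)))).symm
  rw [hprod, ← hσ]
  -- replace φ values by σ values
  have hstep : ∀ p : (Fin b → Fin k) × Fin b,
      (β p.1 p.2).elim 0 (fun y => f y (φ p.1 p.2))
        = (β p.1 p.2).elim 0 (fun y => f y (σ y)) := by
    intro p
    cases h : β p.1 p.2 with
    | none => simp
    | some y =>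
      have hz : p.1 p.2 = (⟨0, hk⟩ : Fin k) := by
        by_contra hne
        have hcon := (hβ p.1 p.2).mpr hne
        rw [h] at hcon
        exact Option.some_ne_none y hcon
      have h2 := hφ p.1 p.2 hz
      rw [h] at h2
      simp only [Option.elim] at h2 ⊢
      rw [h2]
  simp only [hstep]
  -- now sum over pairs equals sum over Fin c
  have h1 : (∑ p : (Fin b → Fin k) × Fin b, (β p.1 p.2).elim 0 (fun y => f y (σ y)))
      = ∑ p ∈ Finset.univ.filter
          (fun p : (Fin b → Fin k) × Fin b => (β p.1 p.2).isSome),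
          (β p.1 p.2).elim 0 (fun y => f y (σ y)) := by
    rw [Finset.sum_filter]
    refine Finset.sum_congr rfl fun p _ => ?_
    cases h : β p.1 p.2 <;> simp [h]
  rw [h1]
  refine Finset.sum_bij
    (fun p hp => (β p.1 p.2).get (by simpa using (Finset.mem_filter.mp hp).2))
    (fun p hp => Finset.mem_univ _) ?_ ?_ ?_
  · intro p hp q hq hpq
    obtain ⟨yp, hyp⟩ := Option.isSome_iff_exists.mp
      (by simpa using (Finset.mem_filter.mp hp).2)
    obtain ⟨yq, hyq⟩ := Option.isSome_iff_exists.mp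
      (by simpa using (Finset.mem_filter.mp hq).2)
    simp only [hyp, hyq, Option.get_some] at hpq
    obtain ⟨r, hr, hu⟩ := hβbij yp
    rw [hu p hyp, hu q (show β q.1 q.2 = some yp by rw [hyq, hpq])]
  · intro y _
    obtain ⟨p, hp, _⟩ := hβbij y
    refine ⟨p, Finset.mem_filter.mpr ⟨Finset.mem_univ _, by simp [hp]⟩, ?_⟩
    simp [hp]
  · intro p hp
    have hs := (Finset.mem_filter.mp hp).2
    obtain ⟨y, hy⟩ := Option.isSome_iff_exists.mp hs
    simp [hy]
end

section
/- Let $(V,d,s)$ be a Channel Assignment instance, $n\geq 1$, $M\geq 1$, $s=(8n-1)M$, and suppose $V$ contains vertices $v_1,\ldots,v_{4n}$ with $d(v_i,v_j)\geq |i-j|\cdot 2M$ for all $i\neq j$ with $\{i,j\}\neq\{1,4n\}$, and $d(v_1,v_{4n})=s-1$. Then for every proper coloring $c:V\to\mathbb{Z}$ with span at most $s$ and with $c(v_1)\leq c(v_{4n})$, the sequence $c(v_1),c(v_2),\ldots,c(v_{4n})$ is strictly increasing. -/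
open Finset

/-- A coloring is proper for a Channel Assignment instance `(V, d, s)`. -/
def CAProper {α : Type*} (V : Finset α) (d : α → α → ℕ) (c : α → ℤ) : Prop :=
  ∀ x ∈ V, ∀ y ∈ V, x ≠ y → (d x y : ℤ) ≤ |c x - c y|

/-- A YES-coloring: proper, with span at most `s`. -/
def CAYes {α : Type*} (V : Finset α) (d : α → α → ℕ) (s : ℕ) (c : α → ℤ) : Prop :=
  CAProper V d c ∧ ∀ x ∈ V, ∀ y ∈ V, c x - c y + 1 ≤ (s : ℤ)

set_option maxHeartbeats 1000000 in
/-- if `V` contains distinct vertices `v₁, …, v_{4n}` with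
`d(v_i, v_j) ≥ |i - j| · 2M` for `i ≠ j`, `{i,j} ≠ {1,4n}`, and
`d(v₁, v_{4n}) = s - 1` where `s = (8n-1)M`, then every YES-coloring `c` with
`c(v₁) ≤ c(v_{4n})` colors `v₁, …, v_{4n}` in strictly increasing order. -/
theorem stmt11 {α : Type*} [DecidableEq α]
    (V : Finset α) (d : α → α → ℕ) (n M s : ℕ)
    (hn : 1 ≤ n) (hM : 1 ≤ M) (hs : s = (8 * n - 1) * M)
    (v : Fin (4 * n) → α) (hinj : Function.Injective v)
    (hmem : ∀ i, v i ∈ V)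
    (hd : ∀ i j : Fin (4 * n), i ≠ j →
      ¬(((i : ℕ) = 0 ∧ (j : ℕ) = 4 * n - 1) ∨ ((i : ℕ) = 4 * n - 1 ∧ (j : ℕ) = 0)) →
      |(i : ℤ) - (j : ℤ)| * (2 * M) ≤ (d (v i) (v j) : ℤ))
    (hd1 : d (v ⟨0, by omega⟩) (v ⟨4 * n - 1, by omega⟩) = s - 1)
    (c : α → ℤ) (hc : CAYes V d s c)
    (hord : c (v ⟨0, by omega⟩) ≤ c (v ⟨4 * n - 1, by omega⟩)) :
    ∀ i j : Fin (4 * n), i < j → c (v i) < c (v j) := by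
  obtain ⟨hprop, hspan⟩ := hc
  have h0lt : 0 < 4 * n := by omega
  have hwlt : 4 * n - 1 < 4 * n := by omega
  set z : Fin (4 * n) := ⟨0, h0lt⟩ with hz
  set w : Fin (4 * n) := ⟨4 * n - 1, hwlt⟩ with hw
  have hd1' : d (v z) (v w) = s - 1 := hd1
  have hord' : c (v z) ≤ c (v w) := hord
  have hzval : (z : ℕ) = 0 := rfl
  have hwval : (w : ℕ) = 4 * n - 1 := rfl
  have hMle : M ≤ 8 * n * M := Nat.le_mul_of_pos_left M (by omega)
  have hsM : s + M = 8 * n * M := by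
    subst hs; rw [Nat.sub_mul, one_mul]; exact Nat.sub_add_cancel hMle
  have hsZ : (s : ℤ) = 8 * n * M - M := by
    have := congrArg (Nat.cast : ℕ → ℤ) hsM; push_cast at this; linarith
  have hnZ : (1:ℤ) ≤ n := by exact_mod_cast hn
  have hMZ : (1:ℤ) ≤ M := by exact_mod_cast hM
  have hs7 : (7:ℤ) ≤ s := by nlinarith
  have hzw : v z ≠ v w := by
    intro h
    have := hinj h
    rw [Fin.ext_iff] at this
    simp only [hzval, hwval] at this
    omega
  -- equality c(v w) - c(v z) = s - 1
  have heq : c (v w) - c (v z) = (s : ℤ) - 1 := by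
    have h := hprop (v z) (hmem z) (v w) (hmem w) hzw
    rw [hd1'] at h
    have hcast : ((s - 1 : ℕ) : ℤ) = (s : ℤ) - 1 := by
      have : 1 ≤ s := by omega
      push_cast [this]; ring
    rw [hcast, abs_sub_comm, abs_of_nonneg (by linarith)] at h
    have h2 := hspan (v w) (hmem w) (v z) (hmem z)
    linarith
  have hbetween : ∀ i : Fin (4 * n), c (v z) ≤ c (v i) ∧ c (v i) ≤ c (v w) := by
    intro i
    have h1 := hspan (v w) (hmem w) (v i) (hmem i)
    have h2 := hspan (v i) (hmem i) (v z) (hmem z)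
    constructor <;> linarith
  have hNZ : ((4 * n - 1 : ℕ) : ℤ) = 4 * (n:ℤ) - 1 := by
    have : 1 ≤ 4 * n := by omega
    push_cast [this]; ring
  have key : ∀ i : Fin (4 * n),
      2 * (i : ℤ) * M ≤ c (v i) - c (v z) ∧
      c (v i) - c (v z) ≤ 2 * (i : ℤ) * M + M - 1 := by
    intro i
    obtain ⟨hb1, hb2⟩ := hbetween i
    have hww : ((w : ℕ) : ℤ) = 4 * (n : ℤ) - 1 := by rw [hwval]; exact hNZ
    have hzz : ((z : ℕ) : ℤ) = 0 := by rw [hzval]; rfl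
    rcases eq_or_ne (i : ℕ) 0 with h0 | h0
    · have hiz : i = z := Fin.ext_iff.mpr (by rw [h0, hzval])
      rw [hiz, hzz]
      constructor <;> [linarith; linarith]
    · rcases eq_or_ne (i : ℕ) (4 * n - 1) with hN | hN
      · have hiw : i = w := Fin.ext_iff.mpr (by rw [hN, hwval])
        rw [hiw, hww, heq, hsZ]
        constructor <;> linarith
      · -- middle case
        have hiz : i ≠ z := fun h => h0 (by rw [h, hzval])
        have hiw : i ≠ w := fun h => hN (by rw [h, hwval])
        have hlow := hd i z hiz (by rintro (⟨a, -⟩ | ⟨a, -⟩); exacts [h0 a, hN a])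
        have hpz := hprop (v i) (hmem i) (v z) (hmem z) (fun h => hiz (hinj h))
        have hhigh := hd i w hiw (by rintro (⟨a, -⟩ | ⟨a, -⟩); exacts [h0 a, hN a])
        have hpw := hprop (v i) (hmem i) (v w) (hmem w) (fun h => hiw (hinj h))
        rw [hzz] at hlow
        rw [hww] at hhigh
        have hile : (i : ℕ) ≤ 4 * n - 1 := by have := i.isLt; omega
        have hiub : ((i : ℕ) : ℤ) ≤ 4 * (n : ℤ) - 1 := by
          rw [← hNZ]; exact_mod_cast hile
        have hilb : (0 : ℤ) ≤ ((i : ℕ) : ℤ) := by positivity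
        rw [abs_of_nonneg (by linarith : (0:ℤ) ≤ c (v i) - c (v z))] at hpz
        rw [abs_of_nonpos (by linarith : c (v i) - c (v w) ≤ 0)] at hpw
        rw [sub_zero, abs_of_nonneg hilb] at hlow
        rw [abs_of_nonpos (by linarith)] at hhigh
        constructor
        · linarith
        · linarith
  intro i j hij
  obtain ⟨ki1, ki2⟩ := key i
  obtain ⟨kj1, kj2⟩ := key j
  have hij' : ((i:ℕ):ℤ) + 1 ≤ ((j:ℕ):ℤ) := by exact_mod_cast hij
  nlinarith [mul_nonneg (by linarith : (0:ℤ) ≤ (j:ℤ) - (i:ℤ) - 1) (by linarith : (0:ℤ) ≤ (M:ℤ))]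
end
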